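/- Let M, S₁ⁿ, Y₁ⁿ, Xⁿ be discrete random vectors on a finite probability space, with M independent of S₁ⁿ, the states S₁,…,Sₙ i.i.d., and for each i the Markov chain Y₁ᵢ → (S₁ᵢ, Xᵢ) → (Y₁^{i−1}, S₁^{n∖i}, M), where Xᵢ is a deterministic function of (M, Y₁^{i−1}, Y₂^{i−1}). Then I(M; Y₁ⁿ | S₁ⁿ) ≤ Σᵢ I(Xᵢ; Y₁ᵢ | S₁ᵢ). -/

import Mathlib

open Finset

/-- Probability that a discrete random variable `X` takes value `x`,
under the probability mass function `μ` on a finite sample space. -/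
noncomputable def prob {Ω α : Type*} [Fintype Ω] [DecidableEq α]
    (μ : Ω → ℝ) (X : Ω → α) (x : α) : ℝ :=
  ∑ ω ∈ Finset.univ.filter (fun ω => X ω = x), μ ω

/-- `μ` is a probability mass function on the finite sample space `Ω`. -/
def IsPMF {Ω : Type*} [Fintype Ω] (μ : Ω → ℝ) : Prop :=
  (∀ ω, 0 ≤ μ ω) ∧ ∑ ω, μ ω = 1

/-- Shannon entropy (natural log) of a discrete random variable. -/
noncomputable def entH {Ω α : Type*} [Fintype Ω] [Fintype α] [DecidableEq α]
    (μ : Ω → ℝ) (X : Ω → α) : ℝ :=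
  ∑ x, -(prob μ X x * Real.log (prob μ X x))

/-- Conditional Shannon entropy `H(X | Y)`. -/
noncomputable def condH {Ω α β : Type*} [Fintype Ω] [Fintype α] [DecidableEq α]
    [Fintype β] [DecidableEq β] (μ : Ω → ℝ) (X : Ω → α) (Y : Ω → β) : ℝ :=
  entH μ (fun ω => (X ω, Y ω)) - entH μ Y

/-- Mutual information `I(X; Y)`. -/
noncomputable def mutInfo {Ω α β : Type*} [Fintype Ω] [Fintype α] [DecidableEq α]
    [Fintype β] [DecidableEq β] (μ : Ω → ℝ) (X : Ω → α) (Y : Ω → β) : ℝ :=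
  entH μ X + entH μ Y - entH μ (fun ω => (X ω, Y ω))

/-- Conditional mutual information `I(X; Y | Z)`. -/
noncomputable def condMutInfo {Ω α β γ : Type*} [Fintype Ω] [Fintype α] [DecidableEq α]
    [Fintype β] [DecidableEq β] [Fintype γ] [DecidableEq γ]
    (μ : Ω → ℝ) (X : Ω → α) (Y : Ω → β) (Z : Ω → γ) : ℝ :=
  condH μ X Z + condH μ Y Z - condH μ (fun ω => (X ω, Y ω)) Z

/-- `X` and `Y` are independent random variables under `μ`. -/
def IndepRV {Ω α β : Type*} [Fintype Ω] [DecidableEq α] [DecidableEq β]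
    (μ : Ω → ℝ) (X : Ω → α) (Y : Ω → β) : Prop :=
  ∀ x y, prob μ (fun ω => (X ω, Y ω)) (x, y) = prob μ X x * prob μ Y y

/-- `A → B → C` forms a Markov chain under `μ`:
`P(A,B,C) P(B) = P(A,B) P(B,C)` pointwise. -/
def MarkovChain {Ω α β γ : Type*} [Fintype Ω] [DecidableEq α] [DecidableEq β] [DecidableEq γ]
    (μ : Ω → ℝ) (A : Ω → α) (B : Ω → β) (C : Ω → γ) : Prop :=
  ∀ a b c, prob μ (fun ω => (A ω, B ω, C ω)) (a, b, c) * prob μ B b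
    = prob μ (fun ω => (A ω, B ω)) (a, b) * prob μ (fun ω => (B ω, C ω)) (b, c)

/-- Binary entropy function (natural log). -/
noncomputable def binEnt (x : ℝ) : ℝ :=
  -(x * Real.log x) - ((1 - x) * Real.log (1 - x))

section Basic
variable {Ω α β γ : Type*} [Fintype Ω] [DecidableEq α] [DecidableEq β] [DecidableEq γ]
  {μ : Ω → ℝ}

lemma prob_nonneg (hμ : ∀ ω, 0 ≤ μ ω) (X : Ω → α) (x : α) : 0 ≤ prob μ X x :=
  Finset.sum_nonneg fun ω _ => hμ ω

lemma prob_as_ite (X : Ω → α) (x : α) :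
    prob μ X x = ∑ ω, if X ω = x then μ ω else 0 := by
  rw [prob, Finset.sum_filter]

lemma sum_prob [Fintype α] (hμ : ∑ ω, μ ω = 1) (X : Ω → α) :
    ∑ x, prob μ X x = 1 := by
  rw [← hμ]
  simp only [prob_as_ite]
  rw [Finset.sum_comm]
  refine Finset.sum_congr rfl fun ω _ => ?_
  simp

lemma prob_comp_inj (g : α → β) (hg : Function.Injective g) (X : Ω → α) (x : α) :
    prob μ (fun ω => g (X ω)) (g x) = prob μ X x := by
  simp only [prob_as_ite]
  refine Finset.sum_congr rfl fun ω _ => ?_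
  simp [hg.eq_iff]

lemma prob_comp_notin (g : α → β) (X : Ω → α) (b : β) (hb : ∀ a, g a ≠ b) :
    prob μ (fun ω => g (X ω)) b = 0 := by
  simp only [prob_as_ite]
  refine Finset.sum_eq_zero fun ω _ => ?_
  simp [hb (X ω)]

lemma entH_comp_inj [Fintype α] [Fintype β] (g : α → β) (hg : Function.Injective g)
    (X : Ω → α) : entH μ (fun ω => g (X ω)) = entH μ X := by
  unfold entH
  calc ∑ b : β, -(prob μ (fun ω => g (X ω)) b * Real.log (prob μ (fun ω => g (X ω)) b))
      = ∑ b ∈ Finset.univ.image g,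
          -(prob μ (fun ω => g (X ω)) b * Real.log (prob μ (fun ω => g (X ω)) b)) := by
        refine (Finset.sum_subset (Finset.subset_univ _) ?_).symm
        intro b _ hb
        simp only [Finset.mem_image, Finset.mem_univ, true_and] at hb
        rw [prob_comp_notin g X b (fun a h => hb ⟨a, h⟩)]
        simp
    _ = ∑ a : α, -(prob μ (fun ω => g (X ω)) (g a) * Real.log (prob μ (fun ω => g (X ω)) (g a))) :=
        Finset.sum_image (fun a _ b _ h => hg h)
    _ = ∑ a : α, -(prob μ X a * Real.log (prob μ X a)) := by
        refine Finset.sum_congr rfl fun a _ => ?_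
        rw [prob_comp_inj g hg]

lemma entH_congr [Fintype α] [Fintype β] (X : Ω → α) (X' : Ω → β)
    (g : α → β) (h : β → α) (hg : ∀ ω, X' ω = g (X ω)) (hh : ∀ ω, X ω = h (X' ω)) :
    entH μ X' = entH μ X := by
  have e1 : entH μ (fun ω => (X ω, X' ω)) = entH μ X := by
    have : (fun ω => (X ω, X' ω)) = fun ω => ((fun a => (a, g a)) (X ω)) := by
      funext ω; simp [hg ω]
    rw [this]
    exact entH_comp_inj (g := fun a => (a, g a)) (fun a b hab => congrArg Prod.fst hab) X
  have e2 : entH μ (fun ω => (X' ω, X ω)) = entH μ X' := by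
    have : (fun ω => (X' ω, X ω)) = fun ω => ((fun b => (b, h b)) (X' ω)) := by
      funext ω; simp [hh ω]
    rw [this]
    exact entH_comp_inj (g := fun b => (b, h b)) (fun a b hab => congrArg Prod.fst hab) X'
  have e3 : entH μ (fun ω => (X' ω, X ω)) = entH μ (fun ω => (X ω, X' ω)) := by
    have : (fun ω => (X' ω, X ω)) = fun ω => Prod.swap ((fun ω' => (X ω', X' ω')) ω) := rfl
    rw [this]
    exact entH_comp_inj (g := Prod.swap) Prod.swap_injective (fun ω => (X ω, X' ω))
  rw [← e2, e3, e1]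

end Basic

section Marg
variable {Ω α β γ : Type*} [Fintype Ω] [DecidableEq α] [DecidableEq β] [DecidableEq γ]
  {μ : Ω → ℝ}

lemma prob_pair_sum_left [Fintype α] (U : Ω → α) (V : Ω → β) (v : β) :
    ∑ u, prob μ (fun ω => (U ω, V ω)) (u, v) = prob μ V v := by
  simp only [prob_as_ite]
  rw [Finset.sum_comm]
  refine Finset.sum_congr rfl fun ω _ => ?_
  rw [Finset.sum_eq_single (U ω)]
  · by_cases h : V ω = v <;> simp [Prod.ext_iff, h]
  · intro b _ hb
    apply if_neg
    simp only [Prod.mk.injEq, not_and]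
    intro h; exact absurd h.symm hb
  · intro h; exact absurd (Finset.mem_univ _) h

lemma marg_m1 [Fintype β] (A : Ω → α) (Y : Ω → β) (Z : Ω → γ) (a : α) (z : γ) :
    ∑ y, prob μ (fun ω => ((A ω, Y ω), Z ω)) ((a, y), z)
      = prob μ (fun ω => (A ω, Z ω)) (a, z) := by
  simp only [prob_as_ite]
  rw [Finset.sum_comm]
  refine Finset.sum_congr rfl fun ω _ => ?_
  rw [Finset.sum_eq_single (Y ω)]
  · by_cases h1 : A ω = a <;> by_cases h2 : Z ω = z <;> simp [Prod.ext_iff, h1, h2]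
  · intro b _ hb
    apply if_neg
    simp only [Prod.mk.injEq, not_and]
    intro h; exact absurd h.2.symm hb
  · intro h; exact absurd (Finset.mem_univ _) h

lemma marg_m2 [Fintype α] (A : Ω → α) (Y : Ω → β) (Z : Ω → γ) (y : β) (z : γ) :
    ∑ a, prob μ (fun ω => ((A ω, Y ω), Z ω)) ((a, y), z)
      = prob μ (fun ω => (Y ω, Z ω)) (y, z) := by
  simp only [prob_as_ite]
  rw [Finset.sum_comm]
  refine Finset.sum_congr rfl fun ω _ => ?_
  rw [Finset.sum_eq_single (A ω)]
  · by_cases h1 : Y ω = y <;> by_cases h2 : Z ω = z <;> simp [Prod.ext_iff, h1, h2]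
  · intro b _ hb
    apply if_neg
    simp only [Prod.mk.injEq, not_and]
    intro h; exact absurd h.1.symm hb
  · intro h; exact absurd (Finset.mem_univ _) h

end Marg

private lemma expand_neg_mul {β : Type*} [Fintype β] (f : β → ℝ) (t c : ℝ)
    (ht : t = ∑ y, f y) : -(t * c) = ∑ y, -(f y * c) := by
  subst ht; rw [Finset.sum_mul, ← Finset.sum_neg_distrib]

private lemma sum_shuffle {α β γ : Type*} [Fintype α] [Fintype β] [Fintype γ]
    (p : α → β → γ → ℝ) (q : α → γ → ℝ) (r : β → γ → ℝ) (s : γ → ℝ)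
    (hmq : ∀ a z, ∑ y, p a y z = q a z)
    (hmr : ∀ y z, ∑ a, p a y z = r y z)
    (hms : ∀ z, ∑ a, q a z = s z) :
    (∑ a, ∑ z, -(q a z * Real.log (q a z))) + (∑ y, ∑ z, -(r y z * Real.log (r y z)))
      - (∑ a, ∑ y, ∑ z, -(p a y z * Real.log (p a y z))) - (∑ z, -(s z * Real.log (s z)))
    = ∑ a, ∑ y, ∑ z, p a y z * (Real.log (p a y z) + Real.log (s z)
        - Real.log (q a z) - Real.log (r y z)) := by
  have B1 : (∑ a, ∑ z, -(q a z * Real.log (q a z)))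
      = ∑ a, ∑ y, ∑ z, -(p a y z * Real.log (q a z)) := by
    refine Finset.sum_congr rfl fun a _ => ?_
    rw [show (∑ z, -(q a z * Real.log (q a z)))
        = ∑ z, ∑ y, -(p a y z * Real.log (q a z)) from
      Finset.sum_congr rfl fun z _ => expand_neg_mul _ _ _ (hmq a z).symm]
    exact Finset.sum_comm
  have B2 : (∑ y, ∑ z, -(r y z * Real.log (r y z)))
      = ∑ a, ∑ y, ∑ z, -(p a y z * Real.log (r y z)) := by
    rw [show (∑ y, ∑ z, -(r y z * Real.log (r y z)))
        = ∑ y, ∑ a, ∑ z, -(p a y z * Real.log (r y z)) from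
      Finset.sum_congr rfl fun y _ => by
        rw [show (∑ z, -(r y z * Real.log (r y z)))
            = ∑ z, ∑ a, -(p a y z * Real.log (r y z)) from
          Finset.sum_congr rfl fun z _ => expand_neg_mul _ _ _ (hmr y z).symm]
        exact Finset.sum_comm]
    exact Finset.sum_comm
  have B4 : (∑ z, -(s z * Real.log (s z)))
      = ∑ a, ∑ y, ∑ z, -(p a y z * Real.log (s z)) := by
    rw [show (∑ z, -(s z * Real.log (s z)))
        = ∑ z, ∑ a, ∑ y, -(p a y z * Real.log (s z)) from
      Finset.sum_congr rfl fun z _ => by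
        rw [expand_neg_mul (fun a => q a z) _ _ (hms z).symm]
        exact Finset.sum_congr rfl fun a _ => expand_neg_mul _ _ _ (hmq a z).symm]
    rw [Finset.sum_comm]
    exact Finset.sum_congr rfl fun a _ => Finset.sum_comm
  rw [B1, B2, B4]
  simp only [← Finset.sum_add_distrib, ← Finset.sum_sub_distrib]
  refine Finset.sum_congr rfl fun a _ => Finset.sum_congr rfl fun y _ =>
    Finset.sum_congr rfl fun z _ => by ring

section CMI
variable {Ω α β γ : Type*} [Fintype Ω] [DecidableEq α] [DecidableEq β] [DecidableEq γ]
  [Fintype α] [Fintype β] [Fintype γ] {μ : Ω → ℝ}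

lemma cmi_def (A : Ω → α) (Y : Ω → β) (Z : Ω → γ) :
    condMutInfo μ A Y Z = entH μ (fun ω => (A ω, Z ω)) + entH μ (fun ω => (Y ω, Z ω))
      - entH μ (fun ω => ((A ω, Y ω), Z ω)) - entH μ Z := by
  simp only [condMutInfo, condH]; ring

lemma cmi_eq_tripleSum (A : Ω → α) (Y : Ω → β) (Z : Ω → γ) :
    condMutInfo μ A Y Z = ∑ a, ∑ y, ∑ z,
      prob μ (fun ω => ((A ω, Y ω), Z ω)) ((a, y), z) *
        (Real.log (prob μ (fun ω => ((A ω, Y ω), Z ω)) ((a, y), z))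
          + Real.log (prob μ Z z)
          - Real.log (prob μ (fun ω => (A ω, Z ω)) (a, z))
          - Real.log (prob μ (fun ω => (Y ω, Z ω)) (y, z))) := by
  rw [cmi_def]
  unfold entH
  rw [Fintype.sum_prod_type, Fintype.sum_prod_type, Fintype.sum_prod_type,
    Fintype.sum_prod_type]
  exact sum_shuffle _ _ _ _ (marg_m1 A Y Z) (marg_m2 A Y Z)
    (fun z => prob_pair_sum_left A Z z)

end CMI

private lemma term_lower_bound (p q r s : ℝ) (hp : 0 ≤ p) (hpq : p ≤ q) (hpr : p ≤ r)
    (hps : p ≤ s) (hq : 0 ≤ q) (hr : 0 ≤ r) :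
    (p - if 0 < s then q * r / s else 0)
      ≤ p * (Real.log p + Real.log s - Real.log q - Real.log r) := by
  rcases eq_or_lt_of_le hp with h0 | h0
  · rw [← h0]
    simp only [zero_mul, zero_sub]
    refine neg_nonpos_of_nonneg ?_
    split_ifs with hs
    · positivity
    · exact le_rfl
  · have hq0 : 0 < q := lt_of_lt_of_le h0 hpq
    have hr0 : 0 < r := lt_of_lt_of_le h0 hpr
    have hs0 : 0 < s := lt_of_lt_of_le h0 hps
    rw [if_pos hs0]
    have hlog : Real.log (q * r / (p * s)) ≤ q * r / (p * s) - 1 :=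
      Real.log_le_sub_one_of_pos (by positivity)
    have hexp : Real.log (q * r / (p * s))
        = Real.log q + Real.log r - Real.log p - Real.log s := by
      rw [Real.log_div (by positivity) (by positivity),
        Real.log_mul (ne_of_gt hq0) (ne_of_gt hr0),
        Real.log_mul (ne_of_gt h0) (ne_of_gt hs0)]
      ring
    have h1 : Real.log p + Real.log s - Real.log q - Real.log r
        ≥ 1 - q * r / (p * s) := by
      have := hlog
      rw [hexp] at this
      linarith
    have h2 : p * (1 - q * r / (p * s)) = p - q * r / s := by
      field_simp
    calc p - q * r / s = p * (1 - q * r / (p * s)) := h2.symm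
      _ ≤ p * (Real.log p + Real.log s - Real.log q - Real.log r) :=
        mul_le_mul_of_nonneg_left h1 hp

section CMI2
variable {Ω α β γ : Type*} [Fintype Ω] [DecidableEq α] [DecidableEq β] [DecidableEq γ]
  [Fintype α] [Fintype β] [Fintype γ] {μ : Ω → ℝ}

lemma cmi_nonneg (hμ : IsPMF μ) (A : Ω → α) (Y : Ω → β) (Z : Ω → γ) :
    0 ≤ condMutInfo μ A Y Z := by
  rw [cmi_eq_tripleSum]
  set p : α → β → γ → ℝ := fun a y z => prob μ (fun ω => ((A ω, Y ω), Z ω)) ((a, y), z)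
    with hpdef
  set q : α → γ → ℝ := fun a z => prob μ (fun ω => (A ω, Z ω)) (a, z) with hqdef
  set r : β → γ → ℝ := fun y z => prob μ (fun ω => (Y ω, Z ω)) (y, z) with hrdef
  set s : γ → ℝ := fun z => prob μ Z z with hsdef
  have hp : ∀ a y z, 0 ≤ p a y z := fun a y z => prob_nonneg hμ.1 _ _
  have hq : ∀ a z, 0 ≤ q a z := fun a z => prob_nonneg hμ.1 _ _
  have hr : ∀ y z, 0 ≤ r y z := fun y z => prob_nonneg hμ.1 _ _
  have hs : ∀ z, 0 ≤ s z := fun z => prob_nonneg hμ.1 _ _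
  have hmq : ∀ a z, ∑ y, p a y z = q a z := fun a z => marg_m1 A Y Z a z
  have hmr : ∀ y z, ∑ a, p a y z = r y z := fun y z => marg_m2 A Y Z y z
  have hms : ∀ z, ∑ a, q a z = s z := fun z => prob_pair_sum_left A Z z
  have hmsr : ∀ z, ∑ y, r y z = s z := fun z => prob_pair_sum_left Y Z z
  have hpq : ∀ a y z, p a y z ≤ q a z := fun a y z => by
    rw [← hmq a z]
    exact Finset.single_le_sum (fun y' _ => hp a y' z) (Finset.mem_univ y)
  have hpr : ∀ a y z, p a y z ≤ r y z := fun a y z => by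
    rw [← hmr y z]
    exact Finset.single_le_sum (fun a' _ => hp a' y z) (Finset.mem_univ a)
  have hqs : ∀ a z, q a z ≤ s z := fun a z => by
    rw [← hms z]
    exact Finset.single_le_sum (fun a' _ => hq a' z) (Finset.mem_univ a)
  have hps : ∀ a y z, p a y z ≤ s z := fun a y z => (hpq a y z).trans (hqs a z)
  have htot : ∑ a, ∑ y, ∑ z, p a y z = 1 := by
    rw [← sum_prob hμ.2 (fun ω => ((A ω, Y ω), Z ω)), Fintype.sum_prod_type,
      Fintype.sum_prod_type]
  have hbound : ∑ a, ∑ y, ∑ z, (p a y z - if 0 < s z then q a z * r y z / s z else 0)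
      ≤ ∑ a, ∑ y, ∑ z, p a y z * (Real.log (p a y z) + Real.log (s z)
        - Real.log (q a z) - Real.log (r y z)) := by
    refine Finset.sum_le_sum fun a _ => Finset.sum_le_sum fun y _ =>
      Finset.sum_le_sum fun z _ => ?_
    exact term_lower_bound _ _ _ _ (hp a y z) (hpq a y z) (hpr a y z) (hps a y z)
      (hq a z) (hr y z)
  refine le_trans ?_ hbound
  simp only [Finset.sum_sub_distrib]
  rw [htot]
  have hM : ∑ a, ∑ y, ∑ z, (if 0 < s z then q a z * r y z / s z else 0)
      = ∑ z, (if 0 < s z then s z else 0) := by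
    rw [show (∑ a, ∑ y, ∑ z, if 0 < s z then q a z * r y z / s z else 0)
        = ∑ a, ∑ z, ∑ y, (if 0 < s z then q a z * r y z / s z else 0) from
      Finset.sum_congr rfl fun a _ => Finset.sum_comm, Finset.sum_comm]
    refine Finset.sum_congr rfl fun z _ => ?_
    by_cases hz : 0 < s z
    · simp only [if_pos hz]
      have : ∑ a, ∑ y, q a z * r y z / s z = (∑ a, q a z) * ((∑ y, r y z) / s z) := by
        rw [Finset.sum_mul]
        refine Finset.sum_congr rfl fun a _ => ?_
        simp only [mul_div_assoc]
        rw [← Finset.mul_sum, ← Finset.sum_div]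
      rw [this, hms z, hmsr z, div_self (ne_of_gt hz), mul_one]
    · simp only [if_neg hz]
      simp
  rw [hM]
  have : ∑ z, (if 0 < s z then s z else 0) ≤ 1 := by
    calc ∑ z, (if 0 < s z then s z else 0) ≤ ∑ z, s z := by
          refine Finset.sum_le_sum fun z _ => ?_
          split_ifs <;> simp [hs z]
      _ = 1 := sum_prob hμ.2 Z
  linarith

lemma cmi_zero_of_markov {Yv : Ω → β} {B : Ω → γ} {C : Ω → α}
    (hμ : IsPMF μ) (hm : MarkovChain μ Yv B C) : condMutInfo μ C Yv B = 0 := by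
  rw [cmi_eq_tripleSum]
  refine Finset.sum_eq_zero fun c _ => Finset.sum_eq_zero fun y _ =>
    Finset.sum_eq_zero fun b _ => ?_
  set p := prob μ (fun ω => ((C ω, Yv ω), B ω)) ((c, y), b) with hpdef
  set q := prob μ (fun ω => (C ω, B ω)) (c, b) with hqdef
  set r := prob μ (fun ω => (Yv ω, B ω)) (y, b) with hrdef
  set s := prob μ B b with hsdef
  have hp : 0 ≤ p := prob_nonneg hμ.1 _ _
  have hpq : p ≤ q := by
    rw [hpdef, hqdef, ← marg_m1 C Yv B c b]
    exact Finset.single_le_sum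
      (fun y' _ => prob_nonneg hμ.1 (fun ω => ((C ω, Yv ω), B ω)) ((c, y'), b))
      (Finset.mem_univ y)
  have hpr : p ≤ r := by
    rw [hpdef, hrdef, ← marg_m2 C Yv B y b]
    exact Finset.single_le_sum
      (fun c' _ => prob_nonneg hμ.1 (fun ω => ((C ω, Yv ω), B ω)) ((c', y), b))
      (Finset.mem_univ c)
  have hps : p ≤ s := by
    refine hpq.trans ?_
    rw [hqdef, hsdef, ← prob_pair_sum_left C B b]
    exact Finset.single_le_sum
      (fun c' _ => prob_nonneg hμ.1 (fun ω => (C ω, B ω)) (c', b))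
      (Finset.mem_univ c)
  -- translate the Markov identity
  have hptriple : p = prob μ (fun ω => (Yv ω, B ω, C ω)) (y, b, c) := by
    rw [hpdef]
    have := prob_comp_inj (μ := μ) (fun x : β × γ × α => ((x.2.2, x.1), x.2.1))
      (fun x₁ x₂ h => by
        simp only [Prod.mk.injEq] at h
        exact Prod.ext h.1.2 (Prod.ext h.2 h.1.1))
      (fun ω => (Yv ω, B ω, C ω)) (y, b, c)
    simpa using this
  have hqswap : q = prob μ (fun ω => (B ω, C ω)) (b, c) := by
    rw [hqdef]
    have := prob_comp_inj (μ := μ) (fun x : γ × α => (x.2, x.1))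
      (fun x₁ x₂ h => by
        simp only [Prod.mk.injEq] at h
        exact Prod.ext h.2 h.1)
      (fun ω => (B ω, C ω)) (b, c)
    simpa using this
  have hmk : p * s = q * r := by
    rw [hptriple, hqswap, hsdef]
    rw [hm y b c]
    ring
  rcases eq_or_lt_of_le hp with h0 | h0
  · rw [← h0, zero_mul]
  · have hq0 : 0 < q := lt_of_lt_of_le h0 hpq
    have hr0 : 0 < r := lt_of_lt_of_le h0 hpr
    have hs0 : 0 < s := lt_of_lt_of_le h0 hps
    have e1 : Real.log (p * s) = Real.log p + Real.log s :=
      Real.log_mul (ne_of_gt h0) (ne_of_gt hs0)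
    have e2 : Real.log (q * r) = Real.log q + Real.log r :=
      Real.log_mul (ne_of_gt hq0) (ne_of_gt hr0)
    have e3 : Real.log (p * s) = Real.log (q * r) := by rw [hmk]
    have : Real.log p + Real.log s - Real.log q - Real.log r = 0 := by linarith
    rw [this, mul_zero]

end CMI2

section CMI3
variable {Ω : Type*} [Fintype Ω] {μ : Ω → ℝ}

lemma condMutInfo_congr {α α' β β' γ γ' : Type*}
    [Fintype α] [DecidableEq α] [Fintype α'] [DecidableEq α']
    [Fintype β] [DecidableEq β] [Fintype β'] [DecidableEq β']
    [Fintype γ] [DecidableEq γ] [Fintype γ'] [DecidableEq γ']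
    (A : Ω → α) (A' : Ω → α') (Y : Ω → β) (Y' : Ω → β') (Z : Ω → γ) (Z' : Ω → γ')
    (gA : α → α') (hA : α' → α) (gY : β → β') (hY : β' → β) (gZ : γ → γ') (hZ : γ' → γ)
    (hgA : ∀ ω, A' ω = gA (A ω)) (hhA : ∀ ω, A ω = hA (A' ω))
    (hgY : ∀ ω, Y' ω = gY (Y ω)) (hhY : ∀ ω, Y ω = hY (Y' ω))
    (hgZ : ∀ ω, Z' ω = gZ (Z ω)) (hhZ : ∀ ω, Z ω = hZ (Z' ω)) :
    condMutInfo μ A' Y' Z' = condMutInfo μ A Y Z := by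
  rw [cmi_def, cmi_def]
  rw [entH_congr (fun ω => (A ω, Z ω)) (fun ω => (A' ω, Z' ω))
    (Prod.map gA gZ) (Prod.map hA hZ)
    (fun ω => by simp [Prod.map, hgA ω, hgZ ω])
    (fun ω => by simp [Prod.map, hhA ω, hhZ ω])]
  rw [entH_congr (fun ω => (Y ω, Z ω)) (fun ω => (Y' ω, Z' ω))
    (Prod.map gY gZ) (Prod.map hY hZ)
    (fun ω => by simp [Prod.map, hgY ω, hgZ ω])
    (fun ω => by simp [Prod.map, hhY ω, hhZ ω])]
  rw [entH_congr (fun ω => ((A ω, Y ω), Z ω)) (fun ω => ((A' ω, Y' ω), Z' ω))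
    (Prod.map (Prod.map gA gY) gZ) (Prod.map (Prod.map hA hY) hZ)
    (fun ω => by simp [Prod.map, hgA ω, hgY ω, hgZ ω])
    (fun ω => by simp [Prod.map, hhA ω, hhY ω, hhZ ω])]
  rw [entH_congr Z Z' gZ hZ hgZ hhZ]

lemma chainCMI {α β β' γ : Type*}
    [Fintype α] [DecidableEq α] [Fintype β] [DecidableEq β]
    [Fintype β'] [DecidableEq β'] [Fintype γ] [DecidableEq γ]
    (A : Ω → α) (B : Ω → β') (Y : Ω → β) (C : Ω → γ) :
    condMutInfo μ (fun ω => (A ω, B ω)) Y C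
      = condMutInfo μ B Y C + condMutInfo μ A Y (fun ω => (B ω, C ω)) := by
  rw [cmi_def, cmi_def, cmi_def]
  have e1 : entH μ (fun ω => (A ω, (B ω, C ω))) = entH μ (fun ω => ((A ω, B ω), C ω)) :=
    entH_congr _ _ (fun x => (x.1.1, (x.1.2, x.2))) (fun x => ((x.1, x.2.1), x.2.2))
      (fun ω => rfl) (fun ω => rfl)
  have e2 : entH μ (fun ω => (Y ω, (B ω, C ω))) = entH μ (fun ω => ((B ω, Y ω), C ω)) :=
    entH_congr _ _ (fun x => (x.1.2, (x.1.1, x.2))) (fun x => ((x.2.1, x.1), x.2.2))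
      (fun ω => rfl) (fun ω => rfl)
  have e3 : entH μ (fun ω => ((A ω, Y ω), (B ω, C ω)))
      = entH μ (fun ω => (((A ω, B ω), Y ω), C ω)) :=
    entH_congr _ _ (fun x => ((x.1.1.1, x.1.2), (x.1.1.2, x.2)))
      (fun x => (((x.1.1, x.2.1), x.1.2), x.2.2))
      (fun ω => rfl) (fun ω => rfl)
  rw [e1, e2, e3]
  ring

end CMI3

private lemma pair_eq {α β : Type*} {a a' : α} {b b' : β} (h1 : a = a') (h2 : b = b') :
    (a, b) = (a', b') := by rw [h1, h2]

lemma key_step {Ω α α' β γ ξ : Type*} [Fintype Ω]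
    [Fintype α] [DecidableEq α] [Fintype α'] [DecidableEq α']
    [Fintype β] [DecidableEq β] [Fintype γ] [DecidableEq γ]
    [Fintype ξ] [DecidableEq ξ] {μ : Ω → ℝ} (hμ : IsPMF μ)
    (Mv : Ω → α) (Bv : Ω → α') (Xv : Ω → ξ) (Yv : Ω → β) (Cv : Ω → γ)
    (hzero : condMutInfo μ (fun ω => (Mv ω, Bv ω)) Yv (fun ω => (Xv ω, Cv ω)) = 0) :
    condMutInfo μ Mv Yv (fun ω => (Bv ω, Cv ω)) ≤ condMutInfo μ Xv Yv Cv := by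
  have hb := chainCMI (μ := μ) Mv Bv Yv Cv
  have hn1 := cmi_nonneg hμ Bv Yv Cv
  have hc := chainCMI (μ := μ) Xv (fun ω => (Mv ω, Bv ω)) Yv Cv
  have hn2 := cmi_nonneg hμ Xv Yv (fun ω => ((Mv ω, Bv ω), Cv ω))
  have hswap : condMutInfo μ (fun ω => (Xv ω, (Mv ω, Bv ω))) Yv Cv
      = condMutInfo μ (fun ω => ((Mv ω, Bv ω), Xv ω)) Yv Cv :=
    condMutInfo_congr _ _ _ _ _ _ Prod.swap Prod.swap id id id id
      (fun ω => rfl) (fun ω => rfl) (fun ω => rfl) (fun ω => rfl)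
      (fun ω => rfl) (fun ω => rfl)
  have hd := chainCMI (μ := μ) (fun ω => (Mv ω, Bv ω)) Xv Yv Cv
  linarith [hb, hn1, hc, hn2, hswap, hd, hzero]

/-- Converse single-letterization: if `M` is independent of the
i.i.d. state sequence `S₁ⁿ`, each `Xᵢ` is a deterministic function of
`(M, Y₁^{i−1}, Y₂^{i−1})`, and `Y₁ᵢ → (S₁ᵢ, Xᵢ) → (Y₁^{i−1}, S₁^{n∖i}, M)` is a
Markov chain for each `i`, then `I(M; Y₁ⁿ | S₁ⁿ) ≤ Σᵢ I(Xᵢ; Y₁ᵢ | S₁ᵢ)`. -/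
theorem converse_single_letterization
    {Ω 𝓜 𝓢 𝓨₁ 𝓨₂ 𝓧 : Type*} [Fintype Ω]
    [Fintype 𝓜] [DecidableEq 𝓜] [Fintype 𝓢] [DecidableEq 𝓢]
    [Fintype 𝓨₁] [DecidableEq 𝓨₁] [Fintype 𝓨₂] [DecidableEq 𝓨₂]
    [Fintype 𝓧] [DecidableEq 𝓧]
    (n : ℕ) (μ : Ω → ℝ) (hμ : IsPMF μ)
    (M : Ω → 𝓜) (S₁ : Ω → Fin n → 𝓢) (Y₁ : Ω → Fin n → 𝓨₁)
    (Y₂ : Ω → Fin n → 𝓨₂) (X : Ω → Fin n → 𝓧)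
    (hIndMS : IndepRV μ M S₁)
    (hiid : ∃ ν : 𝓢 → ℝ, ∀ s : Fin n → 𝓢, prob μ S₁ s = ∏ i, ν (s i))
    (hEnc : ∀ i : Fin n, ∃ f : 𝓜 → (Fin i → 𝓨₁) → (Fin i → 𝓨₂) → 𝓧,
      ∀ ω, X ω i = f (M ω) (fun j => Y₁ ω (Fin.castLE i.isLt.le j))
        (fun j => Y₂ ω (Fin.castLE i.isLt.le j)))
    (hMarkov : ∀ i : Fin n, MarkovChain μ (fun ω => Y₁ ω i)
      (fun ω => (S₁ ω i, X ω i))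
      (fun ω => ((fun j : Fin i => Y₁ ω (Fin.castLE i.isLt.le j)),
        (fun j : {j : Fin n // j ≠ i} => S₁ ω j.1), M ω))) :
    condMutInfo μ M Y₁ S₁
      ≤ ∑ i, condMutInfo μ (fun ω => X ω i) (fun ω => Y₁ ω i) (fun ω => S₁ ω i) := by
  classical
  set f : ℕ → ℝ := fun k =>
    entH μ (fun ω => ((fun j : {j : Fin n // (j : ℕ) < k} => Y₁ ω j.1), S₁ ω)) with hf
  set fm : ℕ → ℝ := fun k =>
    entH μ (fun ω => (M ω, (fun j : {j : Fin n // (j : ℕ) < k} => Y₁ ω j.1), S₁ ω)) with hfm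
  have h1 : entH μ (fun ω => (M ω, S₁ ω)) = fm 0 := by
    rw [hfm]
    exact entH_congr _ _ (fun x => (x.1, x.2.2))
      (fun x => (x.1, (fun j : {j : Fin n // (j : ℕ) < 0} => absurd j.2 (Nat.not_lt_zero _)), x.2))
      (fun ω => rfl)
      (fun ω => pair_eq rfl (pair_eq (funext fun j => absurd j.2 (Nat.not_lt_zero _)) rfl))
  have h2 : entH μ (fun ω => (Y₁ ω, S₁ ω)) = f n := by
    rw [hf]
    exact entH_congr _ _ (fun x => ((fun j : Fin n => x.1 ⟨j, j.isLt⟩), x.2))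
      (fun x => ((fun j : {j : Fin n // (j : ℕ) < n} => x.1 j.1), x.2))
      (fun ω => rfl) (fun ω => rfl)
  have h3 : entH μ (fun ω => ((M ω, Y₁ ω), S₁ ω)) = fm n := by
    rw [hfm]
    exact entH_congr _ _
      (fun x => ((x.1, fun j : Fin n => x.2.1 ⟨j, j.isLt⟩), x.2.2))
      (fun x => (x.1.1, (fun j : {j : Fin n // (j : ℕ) < n} => x.1.2 j.1), x.2))
      (fun ω => rfl) (fun ω => rfl)
  have h4 : entH μ S₁ = f 0 := by
    rw [hf]
    exact entH_congr _ _ (fun x => x.2)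
      (fun s => ((fun j : {j : Fin n // (j : ℕ) < 0} => absurd j.2 (Nat.not_lt_zero _)), s))
      (fun ω => rfl)
      (fun ω => pair_eq (funext fun j => absurd j.2 (Nat.not_lt_zero _)) rfl)
  have hLHS : condMutInfo μ M Y₁ S₁ = f n - fm n - (f 0 - fm 0) := by
    rw [cmi_def, h1, h2, h3, h4]; ring
  have htel : ∑ k ∈ Finset.range n, (f (k + 1) - fm (k + 1) - (f k - fm k))
      = f n - fm n - (f 0 - fm 0) :=
    Finset.sum_range_sub (f := fun k => f k - fm k) (n := n)
  have main : condMutInfo μ M Y₁ S₁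
      = ∑ i : Fin n, (f (↑i + 1) - fm (↑i + 1) - (f ↑i - fm ↑i)) := by
    rw [hLHS, Fin.sum_univ_eq_sum_range (fun k => f (k + 1) - fm (k + 1) - (f k - fm k)) n,
      htel]
  rw [main]
  refine Finset.sum_le_sum fun i _ => ?_
  -- per-coordinate bound
  have t1 : entH μ (fun ω => (M ω, (fun j : {j : Fin n // (j : ℕ) < (i : ℕ)} => Y₁ ω j.1), S₁ ω)) = fm ↑i := by rw [hfm]
  have t4 : entH μ (fun ω => ((fun j : {j : Fin n // (j : ℕ) < (i : ℕ)} => Y₁ ω j.1), S₁ ω)) = f ↑i := by rw [hf]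
  have t2 : entH μ (fun ω => (Y₁ ω i, (fun j : {j : Fin n // (j : ℕ) < (i : ℕ)} => Y₁ ω j.1), S₁ ω)) = f (↑i + 1) := by
    rw [hf]
    refine entH_congr _ _
      (fun x => (x.1 ⟨i, Nat.lt_succ_self _⟩,
        (fun j : {j : Fin n // (j : ℕ) < (i : ℕ)} => x.1 ⟨j.1, Nat.lt_succ_of_lt j.2⟩), x.2))
      (fun x => ((fun j : {j : Fin n // (j : ℕ) < (i : ℕ) + 1} =>
        if hj : (j.1 : ℕ) < (i : ℕ) then x.2.1 ⟨j.1, hj⟩ else x.1), x.2.2))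
      (fun ω => rfl) (fun ω => pair_eq (funext fun j => ?_) rfl)
    by_cases hj : (j.1 : ℕ) < (i : ℕ)
    · rw [dif_pos hj]
    · rw [dif_neg hj]
      have hji : (j.1 : ℕ) = (i : ℕ) := by have := j.2; omega
      rw [show j.1 = i from Fin.val_injective hji]
  have t3 : entH μ (fun ω => ((M ω, Y₁ ω i), (fun j : {j : Fin n // (j : ℕ) < (i : ℕ)} => Y₁ ω j.1), S₁ ω)) = fm (↑i + 1) := by
    rw [hfm]
    refine entH_congr _ _
      (fun x => ((x.1, x.2.1 ⟨i, Nat.lt_succ_self _⟩),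
        (fun j : {j : Fin n // (j : ℕ) < (i : ℕ)} => x.2.1 ⟨j.1, Nat.lt_succ_of_lt j.2⟩), x.2.2))
      (fun x => (x.1.1, (fun j : {j : Fin n // (j : ℕ) < (i : ℕ) + 1} =>
        if hj : (j.1 : ℕ) < (i : ℕ) then x.2.1 ⟨j.1, hj⟩ else x.1.2), x.2.2))
      (fun ω => rfl) (fun ω => pair_eq rfl (pair_eq (funext fun j => ?_) rfl))
    by_cases hj : (j.1 : ℕ) < (i : ℕ)
    · rw [dif_pos hj]
    · rw [dif_neg hj]
      have hji : (j.1 : ℕ) = (i : ℕ) := by have := j.2; omega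
      rw [show j.1 = i from Fin.val_injective hji]
  have hterm : condMutInfo μ M (fun ω => Y₁ ω i) (fun ω => ((fun j : {j : Fin n // (j : ℕ) < (i : ℕ)} => Y₁ ω j.1), S₁ ω)) = fm ↑i + f (↑i + 1) - fm (↑i + 1) - f ↑i := by
    rw [cmi_def]
    rw [t1]
    rw [t2]
    rw [t3]
    try rw [t4]
    try ring
  have ha : condMutInfo μ M (fun ω => Y₁ ω i) (fun ω => ((fun j : {j : Fin n // (j : ℕ) < (i : ℕ)} => Y₁ ω j.1), S₁ ω)) = condMutInfo μ M (fun ω => Y₁ ω i) (fun ω => (((fun j : {j : Fin n // (j : ℕ) < (i : ℕ)} => Y₁ ω j.1), (fun j : {j : Fin n // j ≠ i} => S₁ ω j.1)), S₁ ω i)) := by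
    refine condMutInfo_congr _ _ _ _ (fun ω => (((fun j : {j : Fin n // (j : ℕ) < (i : ℕ)} => Y₁ ω j.1), (fun j : {j : Fin n // j ≠ i} => S₁ ω j.1)), S₁ ω i)) (fun ω => ((fun j : {j : Fin n // (j : ℕ) < (i : ℕ)} => Y₁ ω j.1), S₁ ω))
      id id id id
      (fun x => (x.1.1, fun j : Fin n => if hj : j = i then x.2 else x.1.2 ⟨j, hj⟩))
      (fun x => ((x.1, fun j : {j : Fin n // j ≠ i} => x.2 j.1), x.2 i))
      (fun ω => rfl) (fun ω => rfl) (fun ω => rfl) (fun ω => rfl)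
      (fun ω => pair_eq rfl (funext fun j => ?_)) (fun ω => rfl)
    by_cases hj : j = i
    · rw [dif_pos hj, hj]
    · rw [dif_neg hj]
  have he1 : condMutInfo μ (fun ω => (M ω, (fun j : {j : Fin n // (j : ℕ) < (i : ℕ)} => Y₁ ω j.1), (fun j : {j : Fin n // j ≠ i} => S₁ ω j.1))) (fun ω => Y₁ ω i) (fun ω => (X ω i, S₁ ω i))
      = condMutInfo μ (fun ω => ((fun j : Fin i => Y₁ ω (Fin.castLE i.isLt.le j)),
        (fun j : {j : Fin n // j ≠ i} => S₁ ω j.1), M ω)) (fun ω => Y₁ ω i) (fun ω => (S₁ ω i, X ω i)) := by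
    refine condMutInfo_congr (fun ω => ((fun j : Fin i => Y₁ ω (Fin.castLE i.isLt.le j)),
        (fun j : {j : Fin n // j ≠ i} => S₁ ω j.1), M ω)) (fun ω => (M ω, (fun j : {j : Fin n // (j : ℕ) < (i : ℕ)} => Y₁ ω j.1), (fun j : {j : Fin n // j ≠ i} => S₁ ω j.1))) (fun ω => Y₁ ω i) (fun ω => Y₁ ω i) (fun ω => (S₁ ω i, X ω i)) (fun ω => (X ω i, S₁ ω i))
      (fun x => (x.2.2, (fun j : {j : Fin n // (j : ℕ) < (i : ℕ)} => x.1 ⟨(j.1 : ℕ), j.2⟩), x.2.1))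
      (fun x => ((fun j : Fin (i : ℕ) => x.2.1 ⟨Fin.castLE i.isLt.le j, j.isLt⟩),
        x.2.2, x.1))
      id id Prod.swap Prod.swap
      (fun ω => rfl) (fun ω => rfl) (fun ω => rfl) (fun ω => rfl)
      (fun ω => rfl) (fun ω => rfl)
  have hzero : condMutInfo μ (fun ω => (M ω, (fun j : {j : Fin n // (j : ℕ) < (i : ℕ)} => Y₁ ω j.1), (fun j : {j : Fin n // j ≠ i} => S₁ ω j.1))) (fun ω => Y₁ ω i) (fun ω => (X ω i, S₁ ω i)) = 0 := by
    rw [he1]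
    exact cmi_zero_of_markov hμ (hMarkov i)
  have hstep := key_step (μ := μ) hμ M (fun ω => ((fun j : {j : Fin n // (j : ℕ) < (i : ℕ)} => Y₁ ω j.1), (fun j : {j : Fin n // j ≠ i} => S₁ ω j.1))) (fun ω => X ω i) (fun ω => Y₁ ω i)
    (fun ω => S₁ ω i) hzero
  linarith [hterm, ha, hstep]
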